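/- arXiv:1801.09400 — 2 statements merged into one kernel-verified Lean document; each statement's English description precedes it below -/
import Mathlib

section
/- Let 1 ≤ a ≤ b ≤ c and let x ≠ y be vertices in the second generation V_2 of the antitree AT((a,b,c)). Then for p ∈ [0, 1/(a+b+c)], κ_p(x,y) = (a+b+c−2)/(a+b+c−1) + ((a+b+c)/(a+b+c−1))·p, and for p ∈ [1/(a+b+c), 1], κ_p(x,y) = ((a+b+c)/(a+b+c−1))·(1−p). -/
noncomputable section
open Classical Filter Topology

/-- Vertex set of the antitree with `N` generations of sizes `a 0, a 1, ...`. -/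
abbrev ATV (N : ℕ) (a : ℕ → ℕ) := Σ i : Fin N, Fin (a i.val)

/-- The antitree `AT((a_k))`: distinct vertices are adjacent iff they lie in the same
or in consecutive generations. -/
def antitree (N : ℕ) (a : ℕ → ℕ) : SimpleGraph (ATV N a) where
  Adj x y := x ≠ y ∧ (x.1.val = y.1.val ∨ x.1.val + 1 = y.1.val ∨ y.1.val + 1 = x.1.val)
  symm := by constructor; intro x y h; exact ⟨h.1.symm, by tauto⟩
  loopless := by constructor; intro x h; exact h.1 rfl

/-- Degree of a vertex: the number of its neighbours. -/
def deg {V : Type} (G : SimpleGraph V) (x : V) : ℕ := Nat.card {z // G.Adj x z}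

/-- The `p`-lazy random-walk measure `μ_x^p`. -/
def lazyMeasure {V : Type} (G : SimpleGraph V) (p : ℝ) (x : V) : V → ℝ :=
  fun z => if z = x then p else if G.Adj x z then (1 - p) / (deg G x : ℝ) else 0

/-- Wasserstein distance (w.r.t. the graph metric) between two measures on a finite
vertex set, as an infimum of transport costs over all transport plans. -/
def W1 {V : Type} [Fintype V] (G : SimpleGraph V) (μ ν : V → ℝ) : ℝ :=
  sInf { c | ∃ π : V → V → ℝ, (∀ a b, 0 ≤ π a b) ∧ (∀ a, ∑ b, π a b = μ a) ∧
    (∀ b, ∑ a, π a b = ν b) ∧ c = ∑ a, ∑ b, (G.dist a b : ℝ) * π a b }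

/-- The `p`-Ollivier-Ricci curvature of an edge. -/
def kappa {V : Type} [Fintype V] (G : SimpleGraph V) (p : ℝ) (x y : V) : ℝ :=
  1 - W1 G (lazyMeasure G p x) (lazyMeasure G p y)

section AuxLemmas

private lemma W1_two_point {V : Type} [Fintype V] (G : SimpleGraph V) (x y : V) (hxy : x ≠ y)
    (hx : ∀ z, z ≠ x → G.Adj x z)
    (μ ν : V → ℝ) (hμ : ∀ z, 0 ≤ μ z) (hνx : 0 ≤ ν x)
    (hagree : ∀ z, z ≠ x → z ≠ y → μ z = ν z)
    (δ : ℝ) (hδ : 0 ≤ δ) (hδx : μ x = ν x + δ) (hδy : ν y = μ y + δ) :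
    W1 G μ ν = δ := by
  classical
  have hd1 : ∀ z, z ≠ x → G.dist x z = 1 := fun z hz =>
    SimpleGraph.dist_eq_one_iff_adj.2 (hx z hz)
  set π0 : V → V → ℝ := fun v w =>
    (if w = v then (if v = x then ν x else μ v) else 0) +
    (if v = x ∧ w = y then δ else 0) with hπ0
  have hmem : δ ∈ { c | ∃ π : V → V → ℝ, (∀ a b, 0 ≤ π a b) ∧ (∀ a, ∑ b, π a b = μ a) ∧
      (∀ b, ∑ a, π a b = ν b) ∧ c = ∑ a, ∑ b, (G.dist a b : ℝ) * π a b } := by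
    refine ⟨π0, ?_, ?_, ?_, ?_⟩
    · intro v w
      apply add_nonneg
      · split_ifs <;> first | exact hνx | exact hμ v | exact le_refl 0
      · split_ifs <;> first | exact hδ | exact le_refl 0
    · intro v
      rw [Finset.sum_add_distrib]
      simp only [ite_and]
      rw [Finset.sum_ite_eq' Finset.univ v (fun _ => if v = x then ν x else μ v)]
      by_cases hv : v = x
      · subst hv
        simp [hδx]
      · simp [hv]
    · intro w
      rw [Finset.sum_add_distrib]
      rw [Finset.sum_ite_eq Finset.univ w (fun v => if v = x then ν x else μ v)]
      have : ∀ v, (if v = x ∧ w = y then δ else 0) = if w = y then (if v = x then δ else 0) else 0 := by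
        intro v; by_cases h1 : v = x <;> by_cases h2 : w = y <;> simp [h1, h2]
      rw [Finset.sum_congr rfl (fun v _ => this v)]
      by_cases hw : w = y
      · rw [Finset.sum_congr rfl (fun v _ => by rw [if_pos hw]),
          Finset.sum_ite_eq' Finset.univ x (fun _ => δ)]
        have hwx : ¬ w = x := by rw [hw]; exact fun h => hxy h.symm
        rw [if_neg hwx, hw]; simp; linarith [hδy]
      · by_cases hw2 : w = x
        · subst hw2; simp [hw]
        · simp [hw, hw2, hagree w hw2 hw]
    · have key : ∀ v w, (G.dist v w : ℝ) * π0 v w = if v = x then (if w = y then δ else 0) else 0 := by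
        intro v w
        simp only [hπ0]
        by_cases h1 : w = v
        · subst h1
          have hne : ¬ (w = x ∧ w = y) := by rintro ⟨rfl, rfl⟩; exact hxy rfl
          by_cases h2 : w = x
          · subst h2; simp_all [SimpleGraph.dist_self]
          · simp_all [SimpleGraph.dist_self]
        · by_cases h2 : v = x ∧ w = y
          · rw [if_neg h1, h2.1, h2.2, hd1 y (fun h => hxy h.symm)]
            simp
          · by_cases h3 : v = x
            · subst h3
              have h4 : ¬ w = y := fun hh => h2 ⟨rfl, hh⟩
              simp [h1, h4]
            · simp [h1, h3]
      rw [Finset.sum_congr rfl (fun v _ => Finset.sum_congr rfl (fun w _ => key v w))]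
      simp [Finset.sum_ite_eq', Finset.sum_ite_eq]
  have hlow : ∀ cc ∈ { c | ∃ π : V → V → ℝ, (∀ a b, 0 ≤ π a b) ∧ (∀ a, ∑ b, π a b = μ a) ∧
      (∀ b, ∑ a, π a b = ν b) ∧ c = ∑ a, ∑ b, (G.dist a b : ℝ) * π a b }, δ ≤ cc := by
    rintro cc ⟨π, hpos, hrow, hcol, rfl⟩
    have h1 : ∑ w, (G.dist x w : ℝ) * π x w ≤ ∑ v, ∑ w, (G.dist v w : ℝ) * π v w := by
      apply Finset.single_le_sum (f := fun v => ∑ w, (G.dist v w : ℝ) * π v w)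
      · intro v _
        exact Finset.sum_nonneg fun w _ => mul_nonneg (by positivity) (hpos v w)
      · exact Finset.mem_univ x
    have h2 : ∑ w, (if w = x then 0 else π x w) ≤ ∑ w, (G.dist x w : ℝ) * π x w := by
      apply Finset.sum_le_sum
      intro w _
      by_cases hw : w = x
      · subst hw
        simp [SimpleGraph.dist_self]
      · rw [if_neg hw, hd1 w hw]
        simp
    have h3 : ∑ w, (if w = x then 0 else π x w) = μ x - π x x := by
      have e : ∀ w, (if w = x then 0 else π x w) = π x w - (if w = x then π x x else 0) := by
        intro w; split_ifs with h
        · subst h; ring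
        · ring
      rw [Finset.sum_congr rfl (fun w _ => e w), Finset.sum_sub_distrib, hrow x,
        Finset.sum_ite_eq' Finset.univ x (fun _ => π x x)]
      simp
    have h4 : π x x ≤ ν x := by
      rw [← hcol x]
      apply Finset.single_le_sum (f := fun v => π v x)
      · intro v _; exact hpos v x
      · exact Finset.mem_univ x
    linarith
  rw [W1]
  exact le_antisymm (csInf_le ⟨δ, hlow⟩ hmem) (le_csInf ⟨δ, hmem⟩ hlow)

end AuxLemmas

private lemma kappa_two_middle {V : Type} [Fintype V] (G : SimpleGraph V) (x y : V)
    (hxy : x ≠ y)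
    (hx : ∀ z, z ≠ x → G.Adj x z) (hy : ∀ z, z ≠ y → G.Adj y z)
    (N : ℝ) (hN3 : 3 ≤ N)
    (hdx : ((deg G x : ℕ) : ℝ) = N - 1) (hdy : ((deg G y : ℕ) : ℝ) = N - 1) :
    (∀ p : ℝ, 0 ≤ p → p ≤ 1 / N → kappa G p x y = (N - 2) / (N - 1) + (N / (N - 1)) * p) ∧
    (∀ p : ℝ, 1 / N ≤ p → p ≤ 1 → kappa G p x y = (N / (N - 1)) * (1 - p)) := by
  have hN1pos : (0:ℝ) < N - 1 := by linarith
  have hyx : y ≠ x := fun h => hxy h.symm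
  have hμx : ∀ (p : ℝ) (z : V),
      lazyMeasure G p x z = if z = x then p else (1 - p) / (N - 1) := by
    intro p z
    rw [lazyMeasure]
    by_cases hz : z = x
    · simp [hz]
    · rw [if_neg hz, if_neg hz, if_pos (hx z hz), hdx]
  have hμy : ∀ (p : ℝ) (z : V),
      lazyMeasure G p y z = if z = y then p else (1 - p) / (N - 1) := by
    intro p z
    rw [lazyMeasure]
    by_cases hz : z = y
    · simp [hz]
    · rw [if_neg hz, if_neg hz, if_pos (hy z hz), hdy]
  constructor
  · intro p hp0 hp1
    have hp1' : p ≤ 1 := by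
      have h1 : 1 / N ≤ 1 := by
        rw [div_le_one (by linarith)]; linarith
      linarith
    have hq0 : 0 ≤ (1 - p) / (N - 1) := div_nonneg (by linarith) (le_of_lt hN1pos)
    have hpN : p * N ≤ 1 := by
      rw [← le_div_iff₀ (by linarith : (0:ℝ) < N)]; exact hp1
    have hpq : p ≤ (1 - p) / (N - 1) := by
      rw [le_div_iff₀ hN1pos]; nlinarith
    have hW : W1 G (lazyMeasure G p x) (lazyMeasure G p y) = (1 - p) / (N - 1) - p := by
      apply W1_two_point G y x hyx hy _ _ ?_ ?_ ?_ _ (by linarith) ?_ ?_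
      · intro z
        rw [hμx p z]
        split_ifs
        · exact hp0
        · exact hq0
      · rw [hμy p y, if_pos rfl]; exact hp0
      · intro z hzy hzx
        rw [hμx p z, hμy p z, if_neg hzx, if_neg hzy]
      · rw [hμx p y, hμy p y, if_neg hyx, if_pos rfl]; ring
      · rw [hμx p x, hμy p x, if_pos rfl, if_neg (fun h => hxy h)]; ring
    rw [kappa, hW]
    field_simp
    ring
  · intro p hp1 hp2
    have hp0 : 0 ≤ p := by
      have : (0:ℝ) < 1 / N := by positivity
      linarith
    have hq0 : 0 ≤ (1 - p) / (N - 1) := div_nonneg (by linarith) (le_of_lt hN1pos)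
    have hpN : 1 ≤ p * N := by
      rw [← div_le_iff₀ (by linarith : (0:ℝ) < N)]
      exact hp1
    have hpq : (1 - p) / (N - 1) ≤ p := by
      rw [div_le_iff₀ hN1pos]; nlinarith
    have hW : W1 G (lazyMeasure G p x) (lazyMeasure G p y) = p - (1 - p) / (N - 1) := by
      apply W1_two_point G x y hxy hx _ _ ?_ ?_ ?_ _ (by linarith) ?_ ?_
      · intro z
        rw [hμx p z]
        split_ifs
        · exact hp0
        · exact hq0
      · rw [hμy p x, if_neg (fun h => hxy h)]; exact hq0
      · intro z hzx hzy
        rw [hμx p z, hμy p z, if_neg hzx, if_neg hzy]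
      · rw [hμx p x, hμy p x, if_pos rfl, if_neg (fun h => hxy h)]; ring
      · rw [hμx p y, hμy p y, if_neg hyx, if_pos rfl]; ring
    rw [kappa, hW]
    field_simp
    ring

/-- For `1 ≤ a ≤ b ≤ c` and distinct vertices `x, y` of the second
generation of `AT((a,b,c))`, the Ollivier-Ricci curvature is
`(a+b+c-2)/(a+b+c-1) + ((a+b+c)/(a+b+c-1))p` on `[0, 1/(a+b+c)]` and
`((a+b+c)/(a+b+c-1))(1-p)` on `[1/(a+b+c), 1]`. -/
theorem spherical_inner_edge_kappa (a b c : ℕ) (ha : 1 ≤ a) (hab : a ≤ b) (hbc : b ≤ c)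
    (x y : ATV 3 (fun i => if i = 0 then a else if i = 1 then b else c))
    (hx : x.1.val = 1) (hy : y.1.val = 1) (hxy : x ≠ y) :
    (∀ p : ℝ, 0 ≤ p → p ≤ 1 / ((a : ℝ) + b + c) →
      kappa (antitree 3 (fun i => if i = 0 then a else if i = 1 then b else c)) p x y
        = ((a : ℝ) + b + c - 2) / ((a : ℝ) + b + c - 1)
          + (((a : ℝ) + b + c) / ((a : ℝ) + b + c - 1)) * p) ∧
    (∀ p : ℝ, 1 / ((a : ℝ) + b + c) ≤ p → p ≤ 1 →
      kappa (antitree 3 (fun i => if i = 0 then a else if i = 1 then b else c)) p x y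
        = (((a : ℝ) + b + c) / ((a : ℝ) + b + c - 1)) * (1 - p)) := by
  have hb : 1 ≤ b := le_trans ha hab
  have hc : 1 ≤ c := le_trans hb hbc
  have hAdj : ∀ v : ATV 3 (fun i => if i = 0 then a else if i = 1 then b else c),
      v.1.val = 1 → ∀ z, z ≠ v →
      (antitree 3 (fun i => if i = 0 then a else if i = 1 then b else c)).Adj v z := by
    intro v hv z hz
    refine ⟨fun h => hz h.symm, ?_⟩
    have h3 : z.1.val < 3 := z.1.isLt
    omega
  have hcard : Fintype.card (ATV 3 (fun i => if i = 0 then a else if i = 1 then b else c))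
      = a + b + c := by
    rw [Fintype.card_sigma, Fin.sum_univ_three]
    simp
  have hdeg : ∀ v : ATV 3 (fun i => if i = 0 then a else if i = 1 then b else c),
      v.1.val = 1 →
      deg (antitree 3 (fun i => if i = 0 then a else if i = 1 then b else c)) v
        = a + b + c - 1 := by
    intro v hv
    have hiff : ∀ z, (antitree 3 (fun i => if i = 0 then a else if i = 1 then b else c)).Adj v z
        ↔ ¬ (z = v) := by
      intro z
      constructor
      · intro h hzv; exact h.1 hzv.symm
      · exact hAdj v hv z
    rw [deg, Nat.card_congr (Equiv.subtypeEquivRight hiff), Nat.card_eq_fintype_card,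
      Fintype.card_subtype_compl, hcard]
    simp
  have hN3 : (3:ℝ) ≤ (a : ℝ) + b + c := by
    have h1 : ((1:ℕ):ℝ) ≤ (a:ℝ) := by exact_mod_cast ha
    have h2 : ((1:ℕ):ℝ) ≤ (b:ℝ) := by exact_mod_cast hb
    have h3 : ((1:ℕ):ℝ) ≤ (c:ℝ) := by exact_mod_cast hc
    push_cast at h1 h2 h3
    linarith
  have hdcast : ∀ v : ATV 3 (fun i => if i = 0 then a else if i = 1 then b else c),
      v.1.val = 1 →
      ((deg (antitree 3 (fun i => if i = 0 then a else if i = 1 then b else c)) v : ℕ) : ℝ)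
        = (a : ℝ) + b + c - 1 := by
    intro v hv
    rw [hdeg v hv, Nat.cast_sub (by omega : 1 ≤ a + b + c)]
    push_cast
    ring
  exact kappa_two_middle _ x y hxy (hAdj x hx) (hAdj y hy) ((a:ℝ) + b + c) hN3
    (hdcast x hx) (hdcast y hy)
end
end

section
/- Let 1 ≤ b ≤ c, let x be the unique vertex of V_1 and y a vertex of V_2 in the antitree AT((1,b,c)). Then κ_0(x,y) = (b−1)/(b+c) and κ_{LLY}(x,y) = (b+1)/(b+c). -/
noncomputable section
open Classical Filter Topology

namespace ATaux

abbrev av (b c : ℕ) : ℕ → ℕ := fun i => if i = 0 then 1 else if i = 1 then b else c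

variable {b c : ℕ}

lemma av0 : av b c 0 = 1 := rfl
lemma av1 : av b c 1 = b := rfl
lemma av2 : av b c 2 = c := rfl

lemma sigma_eq_iff {u v : ATV 3 (av b c)} : u = v ↔ (u.1.val = v.1.val ∧ u.2.val = v.2.val) := by
  constructor
  · rintro rfl; exact ⟨rfl, rfl⟩
  · rintro ⟨h1, h2⟩
    obtain ⟨⟨i, hi⟩, j⟩ := u
    obtain ⟨⟨i', hi'⟩, j'⟩ := v
    simp only at h1 h2
    subst h1
    simp only [Sigma.mk.inj_iff, heq_eq_eq, true_and]
    exact Fin.ext h2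

lemma adj_iff {u v : ATV 3 (av b c)} :
    (antitree 3 (av b c)).Adj u v ↔
      u ≠ v ∧ (u.1.val = v.1.val ∨ u.1.val + 1 = v.1.val ∨ v.1.val + 1 = u.1.val) :=
  Iff.rfl

lemma ne_of_val_ne {u v : ATV 3 (av b c)} (h : u.1.val ≠ v.1.val) : u ≠ v := by
  intro he; exact h (sigma_eq_iff.mp he).1

lemma adj_of_val {u v : ATV 3 (av b c)} (h : u.1.val ≠ v.1.val)
    (h2 : u.1.val = v.1.val ∨ u.1.val + 1 = v.1.val ∨ v.1.val + 1 = u.1.val) :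
    (antitree 3 (av b c)).Adj u v := ⟨ne_of_val_ne h, h2⟩

variable {x y : ATV 3 (av b c)}

lemma eq_x (hx : x.1.val = 0) {v : ATV 3 (av b c)} (hv : v.1.val = 0) : v = x := by
  obtain ⟨⟨i, hi⟩, j⟩ := v
  obtain ⟨⟨i', hi'⟩, j'⟩ := x
  simp only at hv hx
  subst hv; subst hx
  have hj : j.val < 1 := j.isLt
  have hj' : j'.val < 1 := j'.isLt
  simp only [Sigma.mk.inj_iff, heq_eq_eq, true_and]
  exact Fin.ext (by omega)


lemma val2_lt_b (hy : y.1.val = 1) : y.2.val < b := by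
  obtain ⟨⟨i, hi⟩, j⟩ := y
  simp only at hy
  subst hy
  exact j.isLt

lemma mk1_eq_y_iff (hy : y.1.val = 1) (j : Fin (av b c ((1 : Fin 3)).val)) :
    (⟨1, j⟩ : ATV 3 (av b c)) = y ↔ j.val = y.2.val := by
  rw [sigma_eq_iff]
  constructor
  · rintro ⟨-, h⟩; exact h
  · intro h; exact ⟨hy.symm, h⟩

lemma sum_classify (hx : x.1.val = 0) (hy : y.1.val = 1)
    (h : ATV 3 (av b c) → ℝ) (h0 h1 h2 h3 : ℝ)
    (e0 : h x = h0) (e1 : h y = h1)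
    (e2 : ∀ v, v.1.val = 1 → v ≠ y → h v = h2)
    (e3 : ∀ v : ATV 3 (av b c), v.1.val = 2 → h v = h3) :
    ∑ v, h v = h0 + h1 + ((b : ℝ) - 1) * h2 + (c : ℝ) * h3 := by
  rw [← Finset.univ_sigma_univ, Finset.sum_sigma, Fin.sum_univ_three]
  set j₀ : Fin (av b c ((1 : Fin 3)).val) := ⟨y.2.val, val2_lt_b hy⟩ with hj₀
  have b0 : ∑ j : Fin (av b c ((0 : Fin 3)).val), h ⟨0, j⟩ = h0 := by
    rw [Finset.sum_congr rfl (fun j _ => by rw [eq_x hx (v := ⟨0, j⟩) rfl, e0])]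
    simp
  have b1 : ∑ j : Fin (av b c ((1 : Fin 3)).val), h ⟨1, j⟩ = h1 + ((b : ℝ) - 1) * h2 := by
    have key : ∀ j : Fin (av b c ((1 : Fin 3)).val),
        h ⟨1, j⟩ = (if j = j₀ then h1 - h2 else 0) + h2 := by
      intro j
      by_cases hj : j = j₀
      · rw [show (⟨1, j⟩ : ATV 3 (av b c)) = y from (mk1_eq_y_iff hy j).mpr (by rw [hj]), e1]
        simp [hj]
      · rw [e2 ⟨1, j⟩ rfl (fun hv => hj (Fin.ext ((mk1_eq_y_iff hy j).mp hv)))]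
        simp [hj]
    rw [Finset.sum_congr rfl (fun j _ => key j), Finset.sum_add_distrib,
      Finset.sum_ite_eq' Finset.univ j₀ (fun _ => h1 - h2), Finset.sum_const]
    simp only [Finset.mem_univ, if_true, Finset.card_univ, Fintype.card_fin]
    show h1 - h2 + (b : ℕ) • h2 = _
    rw [nsmul_eq_mul]
    ring
  have b2 : ∑ j : Fin (av b c ((2 : Fin 3)).val), h ⟨2, j⟩ = (c : ℝ) * h3 := by
    rw [Finset.sum_congr rfl (fun j _ => e3 ⟨2, j⟩ rfl), Finset.sum_const]
    simp only [Finset.card_univ, Fintype.card_fin]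
    show (c : ℕ) • h3 = _
    rw [nsmul_eq_mul]
  rw [b0, b1, b2]
  ring

lemma sum_classify5 (hx : x.1.val = 0) (hy : y.1.val = 1)
    {u : ATV 3 (av b c)} (hu : u.1.val = 1) (huy : u ≠ y)
    (h : ATV 3 (av b c) → ℝ) (h0 h1 hu' h2 h3 : ℝ)
    (e0 : h x = h0) (e1 : h y = h1) (eu : h u = hu')
    (e2 : ∀ v, v.1.val = 1 → v ≠ y → v ≠ u → h v = h2)
    (e3 : ∀ v : ATV 3 (av b c), v.1.val = 2 → h v = h3) :
    ∑ v, h v = h0 + h1 + hu' + ((b : ℝ) - 2) * h2 + (c : ℝ) * h3 := by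
  rw [← Finset.univ_sigma_univ, Finset.sum_sigma, Fin.sum_univ_three]
  set j₀ : Fin (av b c ((1 : Fin 3)).val) := ⟨y.2.val, val2_lt_b hy⟩ with hj₀
  set j₁ : Fin (av b c ((1 : Fin 3)).val) := ⟨u.2.val, val2_lt_b hu⟩ with hj₁
  have hj01 : j₀ ≠ j₁ := by
    intro hj
    apply huy
    rw [← (mk1_eq_y_iff hy j₀).mpr rfl, ← (mk1_eq_y_iff hu j₁).mpr rfl, hj]
  have b0 : ∑ j : Fin (av b c ((0 : Fin 3)).val), h ⟨0, j⟩ = h0 := by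
    rw [Finset.sum_congr rfl (fun j _ => by rw [eq_x hx (v := ⟨0, j⟩) rfl, e0])]
    simp
  have b1 : ∑ j : Fin (av b c ((1 : Fin 3)).val), h ⟨1, j⟩
      = h1 + hu' + ((b : ℝ) - 2) * h2 := by
    have key : ∀ j : Fin (av b c ((1 : Fin 3)).val),
        h ⟨1, j⟩ = (if j = j₀ then h1 - h2 else 0) + (if j = j₁ then hu' - h2 else 0) + h2 := by
      intro j
      by_cases hj : j = j₀
      · rw [show (⟨1, j⟩ : ATV 3 (av b c)) = y from (mk1_eq_y_iff hy j).mpr (by rw [hj]), e1]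
        rw [hj, if_pos rfl, if_neg hj01]; ring
      · by_cases hj' : j = j₁
        · rw [show (⟨1, j⟩ : ATV 3 (av b c)) = u from (mk1_eq_y_iff hu j).mpr (by rw [hj']), eu,
            if_neg hj, hj', if_pos rfl]
          ring
        · rw [e2 ⟨1, j⟩ rfl (fun hv => hj (Fin.ext ((mk1_eq_y_iff hy j).mp hv)))
            (fun hv => hj' (Fin.ext ((mk1_eq_y_iff hu j).mp hv)))]
          simp [hj, hj']
    rw [Finset.sum_congr rfl (fun j _ => key j), Finset.sum_add_distrib, Finset.sum_add_distrib,
      Finset.sum_ite_eq' Finset.univ j₀ (fun _ => h1 - h2),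
      Finset.sum_ite_eq' Finset.univ j₁ (fun _ => hu' - h2), Finset.sum_const]
    simp only [Finset.mem_univ, if_true, Finset.card_univ, Fintype.card_fin]
    show h1 - h2 + (hu' - h2) + (b : ℕ) • h2 = _
    rw [nsmul_eq_mul]
    ring
  have b2 : ∑ j : Fin (av b c ((2 : Fin 3)).val), h ⟨2, j⟩ = (c : ℝ) * h3 := by
    rw [Finset.sum_congr rfl (fun j _ => e3 ⟨2, j⟩ rfl), Finset.sum_const]
    simp only [Finset.card_univ, Fintype.card_fin]
    show (c : ℕ) • h3 = _
    rw [nsmul_eq_mul]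
  rw [b0, b1, b2]
  ring

end ATaux

namespace ATaux2
open ATaux

variable {b c : ℕ} {x y : ATV 3 (av b c)}

lemma deg_x (hx : x.1.val = 0) : deg (antitree 3 (av b c)) x = b := by
  rw [deg, Nat.card_eq_fintype_card, Fintype.card_subtype, Finset.card_filter,
    ← Finset.univ_sigma_univ, Finset.sum_sigma, Fin.sum_univ_three]
  have b0 : ∑ j : Fin (av b c ((0 : Fin 3)).val),
      (if (antitree 3 (av b c)).Adj x ⟨0, j⟩ then 1 else 0) = 0 :=
    Finset.sum_eq_zero fun j _ => by
      rw [if_neg]; intro hadj; exact hadj.1 (eq_x hx rfl).symm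
  have b1 : ∑ j : Fin (av b c ((1 : Fin 3)).val),
      (if (antitree 3 (av b c)).Adj x ⟨1, j⟩ then 1 else 0) = b := by
    rw [Finset.sum_congr rfl (fun j _ => if_pos (adj_of_val (by rw [hx]; simp)
      (Or.inr (Or.inl (by rw [hx]; rfl)))))]
    simp only [Finset.sum_const, Finset.card_univ, Fintype.card_fin, smul_eq_mul, mul_one]
    rfl
  have b2 : ∑ j : Fin (av b c ((2 : Fin 3)).val),
      (if (antitree 3 (av b c)).Adj x ⟨2, j⟩ then 1 else 0) = 0 :=
    Finset.sum_eq_zero fun j _ => by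
      rw [if_neg]
      intro hadj
      have hv : ((⟨2, j⟩ : ATV 3 (av b c))).1.val = 2 := rfl
      rcases hadj.2 with h | h | h <;> rw [hx, hv] at h <;> omega
  rw [b0, b1, b2]
  omega

lemma deg_y (hb : 1 ≤ b) (hy : y.1.val = 1) : deg (antitree 3 (av b c)) y = b + c := by
  rw [deg, Nat.card_eq_fintype_card, Fintype.card_subtype, Finset.card_filter,
    ← Finset.univ_sigma_univ, Finset.sum_sigma, Fin.sum_univ_three]
  set j₀ : Fin (av b c ((1 : Fin 3)).val) := ⟨y.2.val, val2_lt_b hy⟩ with hj₀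
  have b0 : ∑ j : Fin (av b c ((0 : Fin 3)).val),
      (if (antitree 3 (av b c)).Adj y ⟨0, j⟩ then 1 else 0) = 1 := by
    rw [Finset.sum_congr rfl (fun j _ => if_pos (adj_of_val (by rw [hy]; simp)
      (Or.inr (Or.inr (by rw [hy]; rfl)))))]
    simp only [Finset.sum_const, Finset.card_univ, Fintype.card_fin, smul_eq_mul, mul_one]
    rfl
  have b1 : ∑ j : Fin (av b c ((1 : Fin 3)).val),
      (if (antitree 3 (av b c)).Adj y ⟨1, j⟩ then 1 else 0) = b - 1 := by
    have key : ∀ j : Fin (av b c ((1 : Fin 3)).val),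
        (if (antitree 3 (av b c)).Adj y ⟨1, j⟩ then 1 else 0) = if j = j₀ then 0 else 1 := by
      intro j
      by_cases hj : j = j₀
      · rw [if_pos hj, if_neg]
        intro hadj
        exact hadj.1 ((mk1_eq_y_iff hy j).mpr (by rw [hj])).symm
      · rw [if_neg hj, if_pos]
        refine ⟨fun he => hj (Fin.ext ((mk1_eq_y_iff hy j).mp he.symm)), Or.inl (by rw [hy]; rfl)⟩
    rw [Finset.sum_congr rfl (fun j _ => key j)]
    have hB : ∑ j : Fin (av b c ((1 : Fin 3)).val), (if j = j₀ then 1 else 0) = 1 := by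
      rw [Finset.sum_ite_eq' Finset.univ j₀ (fun _ => 1)]
      simp
    have hA : ∑ j : Fin (av b c ((1 : Fin 3)).val),
        ((if j = j₀ then 0 else 1) + (if j = j₀ then 1 else 0)) = b := by
      have hone : ∀ j : Fin (av b c ((1 : Fin 3)).val),
          ((if j = j₀ then 0 else 1) + (if j = j₀ then 1 else 0)) = 1 := by
        intro j; split <;> rfl
      rw [Finset.sum_congr rfl fun j _ => hone j]
      simp only [Finset.sum_const, Finset.card_univ, Fintype.card_fin, smul_eq_mul, mul_one]
      rfl
    rw [Finset.sum_add_distrib] at hA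
    omega
  have b2 : ∑ j : Fin (av b c ((2 : Fin 3)).val),
      (if (antitree 3 (av b c)).Adj y ⟨2, j⟩ then 1 else 0) = c := by
    rw [Finset.sum_congr rfl (fun j _ => if_pos (adj_of_val (by rw [hy]; simp)
      (Or.inr (Or.inl (by rw [hy]; rfl)))))]
    simp only [Finset.sum_const, Finset.card_univ, Fintype.card_fin, smul_eq_mul, mul_one]
    rfl
  rw [b0, b1, b2]
  omega

lemma dist_adj {u v : ATV 3 (av b c)} (h : (antitree 3 (av b c)).Adj u v) :
    (antitree 3 (av b c)).dist u v = 1 :=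
  SimpleGraph.dist_eq_one_iff_adj.mpr h

lemma adj_xy (hx : x.1.val = 0) (hy : y.1.val = 1) : (antitree 3 (av b c)).Adj x y :=
  adj_of_val (by rw [hx, hy]; omega) (Or.inr (Or.inl (by rw [hx, hy])))

lemma dist_x_gen2 (hx : x.1.val = 0) (hy : y.1.val = 1) {w : ATV 3 (av b c)}
    (hw : w.1.val = 2) : (antitree 3 (av b c)).dist x w = 2 := by
  have hxy := adj_xy (b := b) (c := c) hx hy
  have hyw : (antitree 3 (av b c)).Adj y w :=
    adj_of_val (by rw [hy, hw]; omega) (Or.inr (Or.inl (by rw [hy, hw])))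
  have hxw_ne : x ≠ w := ne_of_val_ne (by rw [hx, hw]; omega)
  have hnadj : ¬ (antitree 3 (av b c)).Adj x w := by
    intro h
    rcases h.2 with h | h | h <;> rw [hx, hw] at h <;> omega
  have hle : (antitree 3 (av b c)).dist x w ≤ 2 := by
    have := SimpleGraph.dist_le (SimpleGraph.Walk.cons hxy (SimpleGraph.Walk.cons hyw
      SimpleGraph.Walk.nil))
    simpa using this
  have hpos : 0 < (antitree 3 (av b c)).dist x w :=
    SimpleGraph.Reachable.pos_dist_of_ne
      ⟨SimpleGraph.Walk.cons hxy (SimpleGraph.Walk.cons hyw SimpleGraph.Walk.nil)⟩ hxw_ne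
  have hne1 : (antitree 3 (av b c)).dist x w ≠ 1 :=
    fun h1 => hnadj (SimpleGraph.dist_eq_one_iff_adj.mp h1)
  omega

end ATaux2

namespace ATW1
lemma W1_eq_of {V : Type} [Fintype V] (G : SimpleGraph V) (μ ν : V → ℝ) (K : ℝ) (f : V → ℝ)
    (hf : ∀ u v : V, f u - f v ≤ (G.dist u v : ℝ))
    (π : V → V → ℝ) (hπ0 : ∀ u v, 0 ≤ π u v) (hπμ : ∀ u, ∑ v, π u v = μ u)
    (hπν : ∀ v, ∑ u, π u v = ν v)
    (hsupp : ∀ u v, π u v ≠ 0 → (G.dist u v : ℝ) = f u - f v)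
    (hK : ∑ v, f v * μ v - ∑ v, f v * ν v = K) :
    W1 G μ ν = K := by
  have dual : ∀ σ : V → V → ℝ, (∀ u, ∑ v, σ u v = μ u) → (∀ v, ∑ u, σ u v = ν v) →
      ∑ u, ∑ v, (f u - f v) * σ u v = K := by
    intro σ h1 h2
    have e1 : ∑ v, f v * μ v = ∑ u, ∑ v, f u * σ u v := by
      simp_rw [← h1, Finset.mul_sum]
    have e2 : ∑ v, f v * ν v = ∑ u, ∑ v, f v * σ u v := by
      rw [Finset.sum_comm (γ := V) (f := fun u v => f v * σ u v)]
      simp_rw [← h2, Finset.mul_sum]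
    rw [← hK, e1, e2, ← Finset.sum_sub_distrib]
    refine Finset.sum_congr rfl fun u _ => ?_
    rw [← Finset.sum_sub_distrib]
    exact Finset.sum_congr rfl fun v _ => by ring
  have hKmem : K ∈ { c | ∃ π : V → V → ℝ, (∀ a b, 0 ≤ π a b) ∧ (∀ a, ∑ b, π a b = μ a) ∧
      (∀ b, ∑ a, π a b = ν b) ∧ c = ∑ a, ∑ b, (G.dist a b : ℝ) * π a b } := by
    refine ⟨π, hπ0, hπμ, hπν, ?_⟩
    rw [← dual π hπμ hπν]
    refine Finset.sum_congr rfl fun u _ => Finset.sum_congr rfl fun v _ => ?_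
    by_cases h : π u v = 0
    · rw [h, mul_zero, mul_zero]
    · rw [hsupp u v h]
  have hlb : ∀ t ∈ { c | ∃ π : V → V → ℝ, (∀ a b, 0 ≤ π a b) ∧ (∀ a, ∑ b, π a b = μ a) ∧
      (∀ b, ∑ a, π a b = ν b) ∧ c = ∑ a, ∑ b, (G.dist a b : ℝ) * π a b }, K ≤ t := by
    rintro t ⟨σ, hσ0, hσ1, hσ2, rfl⟩
    rw [← dual σ hσ1 hσ2]
    refine Finset.sum_le_sum fun u _ => Finset.sum_le_sum fun v _ => ?_
    exact mul_le_mul_of_nonneg_right (hf u v) (hσ0 u v)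
  exact le_antisymm (csInf_le ⟨K, hlb⟩ hKmem) (le_csInf ⟨K, hKmem⟩ hlb)
end ATW1

namespace ATmain
open ATaux ATaux2 ATW1

variable {b c : ℕ}

/-- the `p = 0` potential -/
def f0 : ATV 3 (av b c) → ℝ := fun v => if v.1.val = 1 then 1 else 0

/-- the `p = 0` transport plan -/
def pi0 (x y : ATV 3 (av b c)) : ATV 3 (av b c) → ATV 3 (av b c) → ℝ := fun u v =>
  if u.1.val = 1 ∧ u ≠ y ∧ v = u then 1 / ((b : ℝ) + c)
  else if u.1.val = 1 ∧ v.1.val = 2 then 1 / ((b : ℝ) * ((b : ℝ) + c))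
  else if u = y ∧ v = x then 1 / ((b : ℝ) + c)
  else 0

variable {x y : ATV 3 (av b c)}

lemma not_adj_x_gen2 (hx : x.1.val = 0) {w : ATV 3 (av b c)} (hw : w.1.val = 2) :
    ¬ (antitree 3 (av b c)).Adj x w := by
  intro h
  rcases h.2 with h | h | h <;> rw [hx, hw] at h <;> omega

lemma adj_x_gen1 (hx : x.1.val = 0) {v : ATV 3 (av b c)} (hv : v.1.val = 1) :
    (antitree 3 (av b c)).Adj x v :=
  adj_of_val (by rw [hx, hv]; omega) (Or.inr (Or.inl (by rw [hx, hv])))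

lemma adj_y_gen1 (hy : y.1.val = 1) {v : ATV 3 (av b c)} (hv : v.1.val = 1) (hvy : v ≠ y) :
    (antitree 3 (av b c)).Adj y v :=
  ⟨fun he => hvy he.symm, Or.inl (by rw [hy, hv])⟩

lemma adj_y_gen2 (hy : y.1.val = 1) {v : ATV 3 (av b c)} (hv : v.1.val = 2) :
    (antitree 3 (av b c)).Adj y v :=
  adj_of_val (by rw [hy, hv]; omega) (Or.inr (Or.inl (by rw [hy, hv])))

lemma x_ne_y (hx : x.1.val = 0) (hy : y.1.val = 1) : x ≠ y :=
  ne_of_val_ne (by rw [hx, hy]; omega)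

lemma lipschitz_f0 (hx : x.1.val = 0) (hy : y.1.val = 1) :
    ∀ u v : ATV 3 (av b c), f0 u - f0 v ≤ ((antitree 3 (av b c)).dist u v : ℝ) := by
  intro u v
  by_cases huv : u = v
  · subst huv; simp [SimpleGraph.dist_self]
  by_cases h1 : u.1.val = 1
  · by_cases h2 : v.1.val = 1
    · simp only [f0, h1, h2, if_true]
      simp
    · have hadj : (antitree 3 (av b c)).Adj u v := by
        refine ⟨huv, ?_⟩
        have h3 := v.1.isLt
        by_cases h0 : v.1.val = 0
        · exact Or.inr (Or.inr (by rw [h0, h1]))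
        · have hv2 : v.1.val = 2 := by omega
          exact Or.inr (Or.inl (by rw [h1, hv2]))
      rw [dist_adj hadj]
      simp only [f0, h1, h2, if_true, if_false]
      norm_num
  · simp only [f0, h1, if_false]
    have : (0 : ℝ) ≤ ((antitree 3 (av b c)).dist u v : ℝ) := Nat.cast_nonneg _
    split <;> linarith

lemma kappa_zero (hb : 1 ≤ b) (hbc : b ≤ c) (hx : x.1.val = 0) (hy : y.1.val = 1) :
    kappa (antitree 3 (av b c)) 0 x y = ((b : ℝ) - 1) / ((b : ℝ) + c) := by
  have hb' : (1 : ℝ) ≤ (b : ℝ) := by exact_mod_cast hb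
  have hc' : (1 : ℝ) ≤ (c : ℝ) := by exact_mod_cast hb.trans hbc
  have hbne : (b : ℝ) ≠ 0 := by linarith
  have hbcne : (b : ℝ) + (c : ℝ) ≠ 0 := by linarith
  have hxy := x_ne_y hx hy
  have hyx : y ≠ x := Ne.symm hxy
  have hdx : ((deg (antitree 3 (av b c)) x : ℕ) : ℝ) = b := by rw [deg_x hx]
  have hdy : ((deg (antitree 3 (av b c)) y : ℕ) : ℝ) = (b : ℝ) + c := by
    rw [deg_y hb hy]; push_cast; ring
  -- lazyMeasure evaluations
  have hμx : lazyMeasure (antitree 3 (av b c)) 0 x x = 0 := by simp [lazyMeasure]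
  have hμ1 : ∀ v : ATV 3 (av b c), v.1.val = 1 →
      lazyMeasure (antitree 3 (av b c)) 0 x v = 1 / b := by
    intro v hv
    have hvx : v ≠ x := ne_of_val_ne (by rw [hv, hx]; omega)
    rw [lazyMeasure, if_neg hvx, if_pos (adj_x_gen1 hx hv), hdx]
    norm_num
  have hμ2 : ∀ v : ATV 3 (av b c), v.1.val = 2 →
      lazyMeasure (antitree 3 (av b c)) 0 x v = 0 := by
    intro v hv
    have hvx : v ≠ x := ne_of_val_ne (by rw [hv, hx]; omega)
    rw [lazyMeasure, if_neg hvx, if_neg (fun h => not_adj_x_gen2 hx hv h)]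
  have hνx : lazyMeasure (antitree 3 (av b c)) 0 y x = 1 / ((b : ℝ) + c) := by
    rw [lazyMeasure, if_neg hxy, if_pos ((adj_xy hx hy).symm), hdy]
    norm_num
  have hνy : lazyMeasure (antitree 3 (av b c)) 0 y y = 0 := by simp [lazyMeasure]
  have hν1 : ∀ v : ATV 3 (av b c), v.1.val = 1 → v ≠ y →
      lazyMeasure (antitree 3 (av b c)) 0 y v = 1 / ((b : ℝ) + c) := by
    intro v hv hvy
    rw [lazyMeasure, if_neg hvy, if_pos (adj_y_gen1 hy hv hvy), hdy]
    norm_num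
  have hν2 : ∀ v : ATV 3 (av b c), v.1.val = 2 →
      lazyMeasure (antitree 3 (av b c)) 0 y v = 1 / ((b : ℝ) + c) := by
    intro v hv
    have hvy : v ≠ y := ne_of_val_ne (by rw [hv, hy]; omega)
    rw [lazyMeasure, if_neg hvy, if_pos (adj_y_gen2 hy hv), hdy]
    norm_num
  have main : W1 (antitree 3 (av b c)) (lazyMeasure (antitree 3 (av b c)) 0 x)
      (lazyMeasure (antitree 3 (av b c)) 0 y) = ((c : ℝ) + 1) / ((b : ℝ) + c) := by
    apply W1_eq_of _ _ _ _ f0 (lipschitz_f0 hx hy) (pi0 x y)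
    · -- nonnegativity
      intro u v
      rw [pi0]
      split_ifs <;> positivity
    · -- row sums
      intro u
      have hu3 := u.1.isLt
      by_cases h0 : u.1.val = 0
      · have hux : u = x := eq_x hx h0
        subst hux
        rw [hμx]
        refine Finset.sum_eq_zero fun v _ => ?_
        rw [pi0, if_neg (by rw [hx]; simp), if_neg (by rw [hx]; simp),
          if_neg (by exact fun h => hxy h.1)]
      by_cases h1 : u.1.val = 1
      · by_cases huy : u = y
        · subst huy
          rw [hμ1 u h1]
          rw [sum_classify hx hy _ (1 / ((b : ℝ) + c)) 0 0 (1 / ((b : ℝ) * ((b : ℝ) + c)))]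
          · field_simp
            ring
          · rw [pi0, if_neg (by exact fun h => h.2.1 rfl),
              if_neg (by rw [hx] at *; exact fun h => by omega),
              if_pos ⟨rfl, rfl⟩]
          · rw [pi0, if_neg (by exact fun h => h.2.1 rfl),
              if_neg (by rw [h1]; exact fun h => by omega),
              if_neg (by exact fun h => hyx h.2)]
          · intro v hv hvy
            rw [pi0, if_neg (by exact fun h => h.2.1 rfl),
              if_neg (by rw [hv]; exact fun h => by omega),
              if_neg (by exact fun h => (x_ne_y hx hv).symm h.2)]
          · intro v hv
            rw [pi0, if_neg (by exact fun h => h.2.1 rfl), if_pos ⟨h1, hv⟩]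
        · rw [hμ1 u h1]
          rw [sum_classify5 hx hy h1 huy _ 0 0 (1 / ((b : ℝ) + c)) 0
              (1 / ((b : ℝ) * ((b : ℝ) + c)))]
          · field_simp
            ring
          · rw [pi0, if_neg (by exact fun h => (ne_of_val_ne (by rw [hx, h1]; omega)) h.2.2),
              if_neg (by rw [hx]; exact fun h => by omega),
              if_neg (by exact fun h => huy h.1)]
          · rw [pi0, if_neg (by exact fun h => huy (h.2.2.symm)),
              if_neg (by rw [hy]; exact fun h => by omega),
              if_neg (by exact fun h => huy h.1)]
          · rw [pi0, if_pos ⟨h1, huy, rfl⟩]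
          · intro v hv hvy hvu
            rw [pi0, if_neg (by exact fun h => hvu h.2.2),
              if_neg (by rw [hv]; exact fun h => by omega),
              if_neg (by exact fun h => huy h.1)]
          · intro v hv
            rw [pi0, if_neg (by exact fun h => (ne_of_val_ne (by rw [hv, h1]; omega)) h.2.2),
              if_pos ⟨h1, hv⟩]
      · have h2 : u.1.val = 2 := by omega
        rw [hμ2 u h2]
        refine Finset.sum_eq_zero fun v _ => ?_
        rw [pi0, if_neg (by rw [h2]; exact fun h => by omega),
          if_neg (by rw [h2]; exact fun h => by omega),
          if_neg (by exact fun h => (ne_of_val_ne (by rw [h2, hy]; omega)) h.1)]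
    · -- column sums
      intro v
      have hv3 := v.1.isLt
      by_cases h0 : v.1.val = 0
      · have hvx : v = x := eq_x hx h0
        subst hvx
        rw [hνx]
        rw [sum_classify hx hy _ 0 (1 / ((b : ℝ) + c)) 0 0]
        · ring
        · rw [pi0, if_neg (by rw [hx]; exact fun h => by omega),
            if_neg (by rw [hx]; exact fun h => by omega),
            if_neg (by exact fun h => hxy h.1)]
        · rw [pi0, if_neg (by exact fun h => h.2.1 rfl),
            if_neg (by rw [hx]; exact fun h => by omega), if_pos ⟨rfl, rfl⟩]
        · intro u hu huy
          rw [pi0, if_neg (by exact fun h => (ne_of_val_ne (by rw [hx, hu]; omega)) h.2.2.symm),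
            if_neg (by rw [hx]; exact fun h => by omega),
            if_neg (by exact fun h => huy h.1)]
        · intro u hu
          rw [pi0, if_neg (by rw [hu]; exact fun h => by omega),
            if_neg (by rw [hu]; exact fun h => by omega),
            if_neg (by exact fun h => (ne_of_val_ne (by rw [hu, hy]; omega)) h.1)]
      by_cases h1 : v.1.val = 1
      · by_cases hvy : v = y
        · rw [hvy, hνy]
          refine Finset.sum_eq_zero fun u _ => ?_
          rw [pi0, if_neg (fun h => h.2.1 h.2.2.symm),
            if_neg (by rw [hy]; exact fun h => by omega),
            if_neg (fun h => hyx h.2)]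
        · rw [hν1 v h1 hvy]
          rw [sum_classify5 hx hy h1 hvy _ 0 0 (1 / ((b : ℝ) + c)) 0 0]
          · ring
          · rw [pi0, if_neg (by rw [hx]; exact fun h => by omega),
              if_neg (by rw [hx]; exact fun h => by omega),
              if_neg (by exact fun h => hxy h.1)]
          · rw [pi0, if_neg (by exact fun h => h.2.1 rfl),
              if_neg (by rw [h1]; exact fun h => by omega),
              if_neg (by exact fun h => (x_ne_y hx h1) h.2.symm)]
          · rw [pi0, if_pos ⟨h1, hvy, rfl⟩]
          · intro u hu huy huv
            rw [pi0, if_neg (by exact fun h => huv h.2.2.symm),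
              if_neg (by rw [h1]; exact fun h => by omega),
              if_neg (by exact fun h => huy h.1)]
          · intro u hu
            rw [pi0, if_neg (by rw [hu]; exact fun h => by omega),
              if_neg (by rw [hu]; exact fun h => by omega),
              if_neg (by exact fun h => (ne_of_val_ne (by rw [hu, hy]; omega)) h.1)]
      · have h2 : v.1.val = 2 := by omega
        rw [hν2 v h2]
        rw [sum_classify hx hy _ 0 (1 / ((b : ℝ) * ((b : ℝ) + c)))
            (1 / ((b : ℝ) * ((b : ℝ) + c))) 0]
        · field_simp
          try ring
        · rw [pi0, if_neg (by rw [hx]; exact fun h => by omega),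
            if_neg (by rw [hx]; exact fun h => by omega),
            if_neg (by exact fun h => (ne_of_val_ne (by rw [h2, hx]; omega)) h.2)]
        · rw [pi0, if_neg (by exact fun h => h.2.1 rfl), if_pos ⟨hy, h2⟩]
        · intro u hu huy
          rw [pi0, if_neg (by exact fun h => (ne_of_val_ne (by rw [h2, hu]; omega)) h.2.2),
            if_pos ⟨hu, h2⟩]
        · intro u hu
          rw [pi0, if_neg (by rw [hu]; exact fun h => by omega),
            if_neg (by rw [hu]; exact fun h => by omega),
            if_neg (by exact fun h => (ne_of_val_ne (by rw [hu, hy]; omega)) h.1)]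
    · -- support
      intro u v hne
      rw [pi0] at hne
      split_ifs at hne with h1 h2 h3
      · rw [h1.2.2, SimpleGraph.dist_self]
        simp
      · have hadj : (antitree 3 (av b c)).Adj u v :=
          adj_of_val (by rw [h2.1, h2.2]; omega) (Or.inr (Or.inl (by rw [h2.1, h2.2])))
        rw [dist_adj hadj]
        simp only [f0, h2.1, h2.2, if_true]
        norm_num
      · rw [h3.1, h3.2, dist_adj ((adj_xy hx hy).symm)]
        simp only [f0, hy, hx, if_true]
        norm_num
      · exact absurd rfl hne
    · -- hK
      rw [sum_classify hx hy (fun v => f0 v * lazyMeasure (antitree 3 (av b c)) 0 x v)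
          0 (1 / (b : ℝ)) (1 / (b : ℝ)) 0
          (by show f0 x * _ = _; rw [hμx]; ring)
          (by show f0 y * _ = _; rw [hμ1 y hy]; simp [f0, hy])
          (fun v hv hvy => by show f0 v * _ = _; rw [hμ1 v hv]; simp [f0, hv])
          (fun v hv => by show f0 v * _ = _; rw [hμ2 v hv]; ring),
        sum_classify hx hy (fun v => f0 v * lazyMeasure (antitree 3 (av b c)) 0 y v)
          0 0 (1 / ((b : ℝ) + c)) 0
          (by show f0 x * _ = _; rw [hνx]; simp [f0, hx])
          (by show f0 y * _ = _; rw [hνy]; ring)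
          (fun v hv hvy => by show f0 v * _ = _; rw [hν1 v hv hvy]; simp [f0, hv])
          (fun v hv => by show f0 v * _ = _; rw [hν2 v hv]; simp [f0, hv])]
      field_simp
      try ring
  rw [kappa, main]
  field_simp
  ring

/-- the lazy potential -/
def fP : ATV 3 (av b c) → ℝ := fun v => 2 - (v.1.val : ℝ)

/-- the lazy transport plan -/
def piP (p : ℝ) (x y : ATV 3 (av b c)) : ATV 3 (av b c) → ATV 3 (av b c) → ℝ := fun u v =>
  if u = x then
    (if v = x then (1 - p) / ((b : ℝ) + c)
     else if v = y then p - (1 - p) / b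
     else if v.1.val = 2 then (1 - p) / ((b : ℝ) * ((b : ℝ) + c)) else 0)
  else if u = y then (if v = y then (1 - p) / b else 0)
  else if u.1.val = 1 then
    (if v = u then (1 - p) / ((b : ℝ) + c)
     else if v.1.val = 2 then (1 - p) / ((b : ℝ) * ((b : ℝ) + c)) else 0)
  else 0

lemma fP_apply (v : ATV 3 (av b c)) : fP v = 2 - (v.1.val : ℝ) := rfl

lemma lipschitz_fP (hx : x.1.val = 0) (hy : y.1.val = 1) :
    ∀ u v : ATV 3 (av b c), fP u - fP v ≤ ((antitree 3 (av b c)).dist u v : ℝ) := by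
  intro u v
  by_cases huv : u = v
  · subst huv; simp [SimpleGraph.dist_self]
  have hu3 := u.1.isLt
  have hv3 := v.1.isLt
  by_cases hle : v.1.val ≤ u.1.val
  · have h1 : fP u - fP v ≤ 0 := by
      rw [fP_apply, fP_apply]
      have : (v.1.val : ℝ) ≤ (u.1.val : ℝ) := by exact_mod_cast hle
      linarith
    have h0 : (0 : ℝ) ≤ ((antitree 3 (av b c)).dist u v : ℝ) := Nat.cast_nonneg _
    linarith
  · push_neg at hle
    by_cases hcons : v.1.val = u.1.val + 1
    · have hadj : (antitree 3 (av b c)).Adj u v := ⟨huv, Or.inr (Or.inl hcons.symm)⟩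
      rw [dist_adj hadj, fP_apply, fP_apply]
      have : (v.1.val : ℝ) = (u.1.val : ℝ) + 1 := by exact_mod_cast hcons
      norm_num
      linarith
    · have hu0 : u.1.val = 0 := by omega
      have hv2 : v.1.val = 2 := by omega
      have hux : u = x := eq_x hx hu0
      rw [hux, dist_x_gen2 hx hy hv2, fP_apply, fP_apply, hx, hv2]
      norm_num

lemma kappa_lazy (hb : 1 ≤ b) (hbc : b ≤ c) (hx : x.1.val = 0) (hy : y.1.val = 1)
    {p : ℝ} (hp1 : 1 / 2 < p) (hp2 : p < 1) :
    kappa (antitree 3 (av b c)) p x y = (1 - p) * ((b : ℝ) + 1) / ((b : ℝ) + c) := by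
  have hb' : (1 : ℝ) ≤ (b : ℝ) := by exact_mod_cast hb
  have hc' : (1 : ℝ) ≤ (c : ℝ) := by exact_mod_cast hb.trans hbc
  have hbne : (b : ℝ) ≠ 0 := by linarith
  have hbcne : (b : ℝ) + (c : ℝ) ≠ 0 := by linarith
  have hxy := x_ne_y hx hy
  have hyx : y ≠ x := Ne.symm hxy
  have hpb : 0 ≤ p - (1 - p) / b := by
    have h1 : (1 - p) / b ≤ (1 - p) / 1 := by
      apply div_le_div_of_nonneg_left (by linarith) (by norm_num) hb'
    have : (1 - p) / 1 = 1 - p := by ring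
    linarith
  have hdx : ((deg (antitree 3 (av b c)) x : ℕ) : ℝ) = b := by rw [deg_x hx]
  have hdy : ((deg (antitree 3 (av b c)) y : ℕ) : ℝ) = (b : ℝ) + c := by
    rw [deg_y hb hy]; push_cast; ring
  have hμx : lazyMeasure (antitree 3 (av b c)) p x x = p := by simp [lazyMeasure]
  have hμ1 : ∀ v : ATV 3 (av b c), v.1.val = 1 →
      lazyMeasure (antitree 3 (av b c)) p x v = (1 - p) / b := by
    intro v hv
    have hvx : v ≠ x := ne_of_val_ne (by rw [hv, hx]; omega)
    rw [lazyMeasure, if_neg hvx, if_pos (adj_x_gen1 hx hv), hdx]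
  have hμ2 : ∀ v : ATV 3 (av b c), v.1.val = 2 →
      lazyMeasure (antitree 3 (av b c)) p x v = 0 := by
    intro v hv
    have hvx : v ≠ x := ne_of_val_ne (by rw [hv, hx]; omega)
    rw [lazyMeasure, if_neg hvx, if_neg (fun h => not_adj_x_gen2 hx hv h)]
  have hνx : lazyMeasure (antitree 3 (av b c)) p y x = (1 - p) / ((b : ℝ) + c) := by
    rw [lazyMeasure, if_neg hxy, if_pos ((adj_xy hx hy).symm), hdy]
  have hνy : lazyMeasure (antitree 3 (av b c)) p y y = p := by simp [lazyMeasure]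
  have hν1 : ∀ v : ATV 3 (av b c), v.1.val = 1 → v ≠ y →
      lazyMeasure (antitree 3 (av b c)) p y v = (1 - p) / ((b : ℝ) + c) := by
    intro v hv hvy
    rw [lazyMeasure, if_neg hvy, if_pos (adj_y_gen1 hy hv hvy), hdy]
  have hν2 : ∀ v : ATV 3 (av b c), v.1.val = 2 →
      lazyMeasure (antitree 3 (av b c)) p y v = (1 - p) / ((b : ℝ) + c) := by
    intro v hv
    have hvy : v ≠ y := ne_of_val_ne (by rw [hv, hy]; omega)
    rw [lazyMeasure, if_neg hvy, if_pos (adj_y_gen2 hy hv), hdy]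
  have main : W1 (antitree 3 (av b c)) (lazyMeasure (antitree 3 (av b c)) p x)
      (lazyMeasure (antitree 3 (av b c)) p y)
      = 1 - (1 - p) * ((b : ℝ) + 1) / ((b : ℝ) + c) := by
    apply W1_eq_of _ _ _ _ fP (lipschitz_fP hx hy) (piP p x y)
    · -- nonnegativity
      intro u v
      rw [piP]
      split_ifs <;> first
        | positivity
        | exact hpb
        | (apply div_nonneg (by linarith) (by positivity))
    · -- row sums
      intro u
      have hu3 := u.1.isLt
      by_cases h0 : u.1.val = 0
      · have hux : u = x := eq_x hx h0
        rw [hux, hμx]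
        rw [sum_classify hx hy _ ((1 - p) / ((b : ℝ) + c)) (p - (1 - p) / b) 0
            ((1 - p) / ((b : ℝ) * ((b : ℝ) + c)))]
        · field_simp
          ring
        · rw [piP, if_pos rfl, if_pos rfl]
        · rw [piP, if_pos rfl, if_neg hxy.symm, if_pos rfl]
        · intro v hv hvy
          rw [piP, if_pos rfl, if_neg (ne_of_val_ne (by rw [hv, hx]; omega)),
            if_neg hvy, if_neg (by rw [hv]; omega)]
        · intro v hv
          rw [piP, if_pos rfl, if_neg (ne_of_val_ne (by rw [hv, hx]; omega)),
            if_neg (ne_of_val_ne (by rw [hv, hy]; omega)), if_pos hv]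
      by_cases h1 : u.1.val = 1
      · by_cases huy : u = y
        · rw [huy, hμ1 y hy]
          refine Eq.trans (Finset.sum_congr rfl fun v _ => ?_)
            (?_ : ∑ v, (if v = y then (1 - p) / (b : ℝ) else 0) = _)
          · rw [piP, if_neg hyx, if_pos rfl]
          · rw [sum_classify hx hy _ 0 ((1 - p) / (b : ℝ)) 0 0
                (by rw [if_neg hxy]) (by rw [if_pos rfl])
                (fun v hv hvy => by rw [if_neg hvy])
                (fun v hv => by rw [if_neg (ne_of_val_ne (by rw [hv, hy]; omega))])]
            ring
        · rw [hμ1 u h1]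
          rw [sum_classify5 hx hy h1 huy _ 0 0 ((1 - p) / ((b : ℝ) + c)) 0
              ((1 - p) / ((b : ℝ) * ((b : ℝ) + c)))]
          · field_simp
            ring
          · have hux : u ≠ x := ne_of_val_ne (by rw [h1, hx]; omega)
            rw [piP, if_neg hux, if_neg huy, if_pos h1,
              if_neg (fun h => hux h.symm), if_neg (by rw [hx]; omega)]
          · have hux : u ≠ x := ne_of_val_ne (by rw [h1, hx]; omega)
            rw [piP, if_neg hux, if_neg huy, if_pos h1,
              if_neg (fun h => huy h.symm), if_neg (by rw [hy]; omega)]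
          · have hux : u ≠ x := ne_of_val_ne (by rw [h1, hx]; omega)
            rw [piP, if_neg hux, if_neg huy, if_pos h1, if_pos rfl]
          · intro v hv hvy hvu
            have hux : u ≠ x := ne_of_val_ne (by rw [h1, hx]; omega)
            rw [piP, if_neg hux, if_neg huy, if_pos h1,
              if_neg hvu, if_neg (by rw [hv]; omega)]
          · intro v hv
            have hux : u ≠ x := ne_of_val_ne (by rw [h1, hx]; omega)
            rw [piP, if_neg hux, if_neg huy, if_pos h1,
              if_neg (ne_of_val_ne (by rw [hv, h1]; omega)), if_pos hv]
      · have h2 : u.1.val = 2 := by omega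
        rw [hμ2 u h2]
        refine Finset.sum_eq_zero fun v _ => ?_
        rw [piP, if_neg (ne_of_val_ne (by rw [h2, hx]; omega)),
          if_neg (ne_of_val_ne (by rw [h2, hy]; omega)), if_neg (by rw [h2]; omega)]
    · -- column sums
      intro v
      have hv3 := v.1.isLt
      by_cases h0 : v.1.val = 0
      · have hvx : v = x := eq_x hx h0
        rw [hvx, hνx]
        rw [sum_classify hx hy _ ((1 - p) / ((b : ℝ) + c)) 0 0 0]
        · ring
        · rw [piP, if_pos rfl, if_pos rfl]
        · rw [piP, if_neg hyx, if_pos rfl, if_neg hxy]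
        · intro u hu huy
          have hux : u ≠ x := ne_of_val_ne (by rw [hu, hx]; omega)
          rw [piP, if_neg hux, if_neg huy, if_pos hu,
            if_neg (fun h => hux h.symm), if_neg (by rw [hx]; omega)]
        · intro u hu
          rw [piP, if_neg (ne_of_val_ne (by rw [hu, hx]; omega)),
            if_neg (ne_of_val_ne (by rw [hu, hy]; omega)), if_neg (by rw [hu]; omega)]
      by_cases h1 : v.1.val = 1
      · by_cases hvy : v = y
        · rw [hvy, hνy]
          rw [sum_classify hx hy _ (p - (1 - p) / b) ((1 - p) / (b : ℝ)) 0 0]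
          · field_simp
            ring
          · rw [piP, if_pos rfl, if_neg hxy.symm, if_pos rfl]
          · rw [piP, if_neg hyx, if_pos rfl, if_pos rfl]
          · intro u hu huy
            have hux : u ≠ x := ne_of_val_ne (by rw [hu, hx]; omega)
            rw [piP, if_neg hux, if_neg huy, if_pos hu,
              if_neg (fun h => huy h.symm), if_neg (by rw [hy]; omega)]
          · intro u hu
            rw [piP, if_neg (ne_of_val_ne (by rw [hu, hx]; omega)),
              if_neg (ne_of_val_ne (by rw [hu, hy]; omega)), if_neg (by rw [hu]; omega)]
        · rw [hν1 v h1 hvy]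
          rw [sum_classify5 hx hy h1 hvy _ 0 0 ((1 - p) / ((b : ℝ) + c)) 0 0]
          · ring
          · have hvx : v ≠ x := ne_of_val_ne (by rw [h1, hx]; omega)
            rw [piP, if_pos rfl, if_neg hvx, if_neg hvy, if_neg (by rw [h1]; omega)]
          · rw [piP, if_neg hyx, if_pos rfl, if_neg hvy]
          · have hvx : v ≠ x := ne_of_val_ne (by rw [h1, hx]; omega)
            rw [piP, if_neg hvx, if_neg hvy, if_pos h1, if_pos rfl]
          · intro u hu huy huv
            have hux : u ≠ x := ne_of_val_ne (by rw [hu, hx]; omega)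
            rw [piP, if_neg hux, if_neg huy, if_pos hu,
              if_neg (fun h => huv h.symm), if_neg (by rw [h1]; omega)]
          · intro u hu
            rw [piP, if_neg (ne_of_val_ne (by rw [hu, hx]; omega)),
              if_neg (ne_of_val_ne (by rw [hu, hy]; omega)), if_neg (by rw [hu]; omega)]
      · have h2 : v.1.val = 2 := by omega
        rw [hν2 v h2]
        rw [sum_classify hx hy _ ((1 - p) / ((b : ℝ) * ((b : ℝ) + c))) 0
            ((1 - p) / ((b : ℝ) * ((b : ℝ) + c))) 0]
        · field_simp
          ring
        · have hvx : v ≠ x := ne_of_val_ne (by rw [h2, hx]; omega)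
          have hvy : v ≠ y := ne_of_val_ne (by rw [h2, hy]; omega)
          rw [piP, if_pos rfl, if_neg hvx, if_neg hvy, if_pos h2]
        · have hvy : v ≠ y := ne_of_val_ne (by rw [h2, hy]; omega)
          rw [piP, if_neg hyx, if_pos rfl, if_neg hvy]
        · intro u hu huy
          have hux : u ≠ x := ne_of_val_ne (by rw [hu, hx]; omega)
          rw [piP, if_neg hux, if_neg huy, if_pos hu,
            if_neg (ne_of_val_ne (by rw [h2, hu]; omega)), if_pos h2]
        · intro u hu
          rw [piP, if_neg (ne_of_val_ne (by rw [hu, hx]; omega)),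
            if_neg (ne_of_val_ne (by rw [hu, hy]; omega)), if_neg (by rw [hu]; omega)]
    · -- support
      intro u v hne
      rw [piP] at hne
      split_ifs at hne with c1 c2 c3 c4 c5 c6 c7 c8 c9
      · rw [c1, c2, SimpleGraph.dist_self]
        simp
      · rw [c1, c3, dist_adj (adj_xy hx hy), fP_apply, fP_apply, hx, hy]
        norm_num
      · rw [c1, dist_x_gen2 hx hy c4, fP_apply, fP_apply, hx, c4]
        norm_num
      · exact absurd rfl hne
      · rw [c5, c6, SimpleGraph.dist_self]
        simp
      · exact absurd rfl hne
      · rw [c8, SimpleGraph.dist_self]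
        simp
      · have hadj : (antitree 3 (av b c)).Adj u v :=
          adj_of_val (by rw [c7, c9]; omega) (Or.inr (Or.inl (by rw [c7, c9])))
        rw [dist_adj hadj, fP_apply, fP_apply, c7, c9]
        norm_num
      · exact absurd rfl hne
      · exact absurd rfl hne
    · -- the duality value
      rw [sum_classify hx hy (fun v => fP v * lazyMeasure (antitree 3 (av b c)) p x v)
          (2 * p) ((1 - p) / b) ((1 - p) / b) 0
          (by show fP x * _ = _; rw [hμx, fP_apply, hx]; push_cast; ring)
          (by show fP y * _ = _; rw [hμ1 y hy, fP_apply, hy]; push_cast; ring)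
          (fun v hv hvy => by
            show fP v * _ = _; rw [hμ1 v hv, fP_apply, hv]; push_cast; ring)
          (fun v hv => by show fP v * _ = _; rw [hμ2 v hv]; ring),
        sum_classify hx hy (fun v => fP v * lazyMeasure (antitree 3 (av b c)) p y v)
          (2 * ((1 - p) / ((b : ℝ) + c))) p ((1 - p) / ((b : ℝ) + c)) 0
          (by show fP x * _ = _; rw [hνx, fP_apply, hx]; push_cast; ring)
          (by show fP y * _ = _; rw [hνy, fP_apply, hy]; push_cast; ring)
          (fun v hv hvy => by
            show fP v * _ = _; rw [hν1 v hv hvy, fP_apply, hv]; push_cast; ring)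
          (fun v hv => by
            show fP v * _ = _; rw [hν2 v hv, fP_apply, hv]; push_cast; ring)]
      field_simp
      ring
  rw [kappa, main]
  ring

end ATmain

/-- For `1 ≤ b ≤ c`, `x` the unique root vertex and `y ∈ V_2` of the
antitree `AT((1,b,c))`, we have `κ_0(x,y) = (b-1)/(b+c)` and
`κ_{LLY}(x,y) = lim_{p→1} κ_p(x,y)/(1-p) = (b+1)/(b+c)`. -/
theorem radial_root_edge_kappa (b c : ℕ) (hb : 1 ≤ b) (hbc : b ≤ c)
    (x y : ATV 3 (fun i => if i = 0 then 1 else if i = 1 then b else c))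
    (hx : x.1.val = 0) (hy : y.1.val = 1) :
    kappa (antitree 3 (fun i => if i = 0 then 1 else if i = 1 then b else c)) 0 x y
      = ((b : ℝ) - 1) / ((b : ℝ) + c) ∧
    Tendsto (fun p : ℝ =>
        kappa (antitree 3 (fun i => if i = 0 then 1 else if i = 1 then b else c)) p x y
          / (1 - p)) (𝓝[<] 1) (𝓝 (((b : ℝ) + 1) / ((b : ℝ) + c))) := by
  constructor
  · exact ATmain.kappa_zero hb hbc hx hy
  · have hb' : (1 : ℝ) ≤ (b : ℝ) := by exact_mod_cast hb
    have hc' : (1 : ℝ) ≤ (c : ℝ) := by exact_mod_cast hb.trans hbc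
    have hbcne : (b : ℝ) + (c : ℝ) ≠ 0 := by linarith
    have hmem : Set.Ioo (1/2 : ℝ) 1 ∈ 𝓝[<] (1 : ℝ) :=
      Ioo_mem_nhdsLT_of_mem (by norm_num)
    refine Tendsto.congr' ?_ tendsto_const_nhds
    refine Filter.eventuallyEq_of_mem hmem (fun p hp => ?_)
    rw [ATmain.kappa_lazy hb hbc hx hy hp.1 hp.2]
    have hpne : (1 : ℝ) - p ≠ 0 := by have := hp.2; intro h; simp only [Set.mem_Ioo] at hp; linarith [hp.2]
    field_simp
end
end
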